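/- Let φ be a self-map of the (q+1)-homogeneous rooted tree T with q ≥ 2, and let 1 ≤ p < ∞. If the composition operator C_φ is bounded on T_p, then there exists M > 0 such that |φ(v)| ≤ |v| + M for all v ∈ T. -/

import Mathlib

open scoped BigOperators Classical

noncomputable section

/-- `treeC q n` is the number `c_n` of vertices at level `n` of the
`(q+1)`-homogeneous rooted tree: `c_0 = 1` and `c_n = (q+1) q^(n-1)` for `n ≥ 1`. -/
def treeC (q n : ℕ) : ℕ := if n = 0 then 1 else (q + 1) * q ^ (n - 1)

/-- An abstract `(q+1)`-homogeneous rooted tree, described by its vertex set, root,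
level function `|·|` (graph distance to the root), and the level counts:
level `n` contains exactly `c_n = treeC q n` vertices. -/
structure HomTree (q : ℕ) where
  V : Type
  root : V
  level : V → ℕ
  level_eq_zero_iff : ∀ v : V, level v = 0 ↔ v = root
  finiteLevel : ∀ n : ℕ, {v : V | level v = n}.Finite
  card_level : ∀ n : ℕ, (finiteLevel n).toFinset.card = treeC q n

namespace HomTree

variable {q : ℕ} (T : HomTree q)

/-- The set `D_n` of vertices of level `n`, as a finset. -/
def levelFinset (n : ℕ) : Finset T.V := (T.finiteLevel n).toFinset

/-- `M_p(n, f)` for `0 < p < ∞`: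
`M_p(n,f) = ((1/c_n) ∑_{|v|=n} |f v|^p)^(1/p)` (which equals `|f o|` for `n = 0`). -/
def Mp (p : ℝ) (n : ℕ) (f : T.V → ℂ) : ℝ :=
  ((1 / (treeC q n : ℝ)) * ∑ v ∈ T.levelFinset n, ‖f v‖ ^ p) ^ (1 / p)

/-- `M_∞(n, f) = max_{|v| = n} |f v|`. -/
def Minf (n : ℕ) (f : T.V → ℂ) : ℝ :=
  sSup ((fun v => ‖f v‖) '' {v : T.V | T.level v = n})

/-- `f ∈ T_p`, i.e. `‖f‖_p = sup_n M_p(n,f) < ∞`. -/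
def memTp (p : ℝ) (f : T.V → ℂ) : Prop := BddAbove (Set.range fun n => T.Mp p n f)

/-- `‖f‖_p = sup_n M_p(n, f)`. -/
def normTp (p : ℝ) (f : T.V → ℂ) : ℝ := ⨆ n, T.Mp p n f

/-- `f ∈ T_∞`. -/
def memTinf (f : T.V → ℂ) : Prop := BddAbove (Set.range fun n => T.Minf n f)

/-- `‖f‖_∞ = sup_n M_∞(n, f)`. -/
def normTinf (f : T.V → ℂ) : ℝ := ⨆ n, T.Minf n f

/-- `f ∈ T_{p,0}`: `f ∈ T_p` and `M_p(n,f) → 0` as `n → ∞`. -/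
def memTp0 (p : ℝ) (f : T.V → ℂ) : Prop :=
  T.memTp p f ∧ Filter.Tendsto (fun n => T.Mp p n f) Filter.atTop (nhds 0)

/-- `f ∈ T_{∞,0}`. -/
def memTinf0 (f : T.V → ℂ) : Prop :=
  T.memTinf f ∧ Filter.Tendsto (fun n => T.Minf n f) Filter.atTop (nhds 0)

/-- `N_φ(n, w)`: the number of preimages of `w` under `φ` at level `n`. -/
def Nphi (phi : T.V → T.V) (n : ℕ) (w : T.V) : ℕ :=
  ((T.levelFinset n).filter fun v => phi v = w).card

/-- `N_{m,n} = max_{|w| = m} N_φ(n, w)`. -/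
def Nmax (phi : T.V → T.V) (m n : ℕ) : ℕ :=
  (T.levelFinset m).sup fun w => T.Nphi phi n w

/-- `C_φ` is a bounded operator on `T_p`: it maps `T_p` into `T_p` and
`‖f ∘ φ‖_p ≤ C ‖f‖_p` for some constant `C`. -/
def BoundedCompTp (p : ℝ) (phi : T.V → T.V) : Prop :=
  (∀ f : T.V → ℂ, T.memTp p f → T.memTp p (f ∘ phi)) ∧
  ∃ C : ℝ, ∀ f : T.V → ℂ, T.memTp p f → T.normTp p (f ∘ phi) ≤ C * T.normTp p f

/-- The operator norm of `C_φ` on `T_p`: `sup {‖f ∘ φ‖_p : f ∈ T_p, ‖f‖_p = 1}`. -/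
def opNormTp (p : ℝ) (phi : T.V → T.V) : ℝ :=
  sSup {x : ℝ | ∃ f : T.V → ℂ, T.memTp p f ∧ T.normTp p f = 1 ∧ x = T.normTp p (f ∘ phi)}

/-- `C_φ` is a bounded operator on `T_{p,0}`. -/
def BoundedCompTp0 (p : ℝ) (phi : T.V → T.V) : Prop :=
  (∀ f : T.V → ℂ, T.memTp0 p f → T.memTp0 p (f ∘ phi)) ∧
  ∃ C : ℝ, ∀ f : T.V → ℂ, T.memTp0 p f → T.normTp p (f ∘ phi) ≤ C * T.normTp p f

/-- The operator norm of `C_φ` on `T_{p,0}`. -/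
def opNormTp0 (p : ℝ) (phi : T.V → T.V) : ℝ :=
  sSup {x : ℝ | ∃ f : T.V → ℂ, T.memTp0 p f ∧ T.normTp p f = 1 ∧ x = T.normTp p (f ∘ phi)}

/-- `C_φ` is a bounded operator on `T_{∞,0}`. -/
def BoundedCompTinf0 (phi : T.V → T.V) : Prop :=
  (∀ f : T.V → ℂ, T.memTinf0 f → T.memTinf0 (f ∘ phi)) ∧
  ∃ C : ℝ, ∀ f : T.V → ℂ, T.memTinf0 f → T.normTinf (f ∘ phi) ≤ C * T.normTinf f

end HomTree

lemma treeC_pos' {q : ℕ} (hq : 1 ≤ q) (n : ℕ) : 0 < treeC q n := by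
  unfold treeC
  split
  · exact one_pos
  · exact Nat.mul_pos (Nat.succ_pos q) (pow_pos hq _)

lemma treeC_mul_le' {q : ℕ} (hq : 2 ≤ q) {n m : ℕ} (h : n < m) :
    treeC q n * q ^ (m - n - 1) ≤ treeC q m := by
  have hq1 : 1 ≤ q := le_trans one_le_two hq
  have hm : m ≠ 0 := by omega
  unfold treeC
  rcases Nat.eq_zero_or_pos n with hn | hn
  · subst hn
    rw [if_pos rfl, if_neg hm, one_mul, Nat.sub_zero]
    calc q ^ (m - 1) = 1 * q ^ (m - 1) := (one_mul _).symm
    _ ≤ (q + 1) * q ^ (m - 1) := Nat.mul_le_mul_right _ (by omega)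
  · have hn' : n ≠ 0 := by omega
    simp only [if_neg hn', if_neg hm]
    rw [mul_assoc, ← pow_add]
    exact Nat.mul_le_mul_left _ (Nat.pow_le_pow_right hq1 (by omega))

/-- If `q ≥ 2`, `1 ≤ p < ∞` and `C_φ` is bounded on `T_p`, then there is `M > 0` with
`|φ v| ≤ |v| + M` for all `v`. -/
theorem level_growth_of_bounded_comp (q : ℕ) (hq : 2 ≤ q) (T : HomTree q)
    (p : ℝ) (hp : 1 ≤ p) (phi : T.V → T.V) (hb : T.BoundedCompTp p phi) :
    ∃ M : ℕ, 0 < M ∧ ∀ v : T.V, T.level (phi v) ≤ T.level v + M := by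
  have hp0 : 0 < p := lt_of_lt_of_le one_pos hp
  obtain ⟨hmap, C, hC⟩ := hb
  obtain ⟨k, hk⟩ := pow_unbounded_of_one_lt (C ^ p) (one_lt_two : (1 : ℝ) < 2)
  refine ⟨k + 1, Nat.succ_pos k, ?_⟩
  intro v
  by_contra hlt
  push_neg at hlt
  set n := T.level v with hn
  set m := T.level (phi v) with hm
  have hcpos : ∀ j : ℕ, (0 : ℝ) < (treeC q j : ℝ) := fun j => by
    exact_mod_cast treeC_pos' (le_trans one_le_two hq) j
  set f : T.V → ℂ := fun u => if u = phi v then 1 else 0 with hf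
  have habs : ∀ u, ‖f u‖ ^ p = if u = phi v then (1 : ℝ) else 0 := by
    intro u
    by_cases h : u = phi v <;> simp [hf, h, Real.zero_rpow hp0.ne']
  have hmemlevel : ∀ (u : T.V) (j : ℕ), u ∈ T.levelFinset j ↔ T.level u = j := by
    intro u j; simp [HomTree.levelFinset, Set.Finite.mem_toFinset]
  have hsum : ∀ j : ℕ, ∑ u ∈ T.levelFinset j, ‖f u‖ ^ p
      = if j = m then 1 else 0 := by
    intro j
    simp only [habs]
    rw [Finset.sum_ite_eq' (T.levelFinset j) (phi v) (fun _ => (1 : ℝ))]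
    by_cases h : j = m
    · rw [if_pos ((hmemlevel _ _).mpr (by rw [h])), if_pos h]
    · rw [if_neg, if_neg h]
      intro hmem
      exact h (((hmemlevel _ _).mp hmem) ▸ rfl)
  have hMp : ∀ j : ℕ, T.Mp p j f
      = if j = m then (1 / (treeC q m : ℝ)) ^ (1 / p) else 0 := by
    intro j
    rw [HomTree.Mp, hsum j]
    by_cases h : j = m
    · subst h; rw [if_pos rfl, if_pos rfl, mul_one]
    · rw [if_neg h, if_neg h, mul_zero, Real.zero_rpow (one_div_ne_zero hp0.ne')]
  have hapos : (0 : ℝ) < (1 / (treeC q m : ℝ)) ^ (1 / p) :=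
    Real.rpow_pos_of_pos (one_div_pos.mpr (hcpos m)) _
  have hmem : T.memTp p f := by
    refine ⟨(1 / (treeC q m : ℝ)) ^ (1 / p), ?_⟩
    rintro x ⟨j, rfl⟩
    dsimp only
    rw [hMp j]
    split
    · exact le_rfl
    · exact hapos.le
  have hnorm : T.normTp p f = (1 / (treeC q m : ℝ)) ^ (1 / p) := by
    rw [HomTree.normTp]
    apply le_antisymm
    · refine ciSup_le fun j => ?_
      try dsimp only
      rw [hMp j]
      split
      · exact le_rfl
      · exact hapos.le
    · have h1 := le_ciSup hmem m
      try dsimp only at h1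
      rwa [hMp m, if_pos rfl] at h1
  have hvmem : v ∈ T.levelFinset n := (hmemlevel v n).mpr rfl
  have hsum2 : (1 : ℝ) ≤ ∑ u ∈ T.levelFinset n, ‖(f ∘ phi) u‖ ^ p := by
    have h1 : ‖(f ∘ phi) v‖ ^ p = 1 := by simp [hf]
    calc (1 : ℝ) = ‖(f ∘ phi) v‖ ^ p := h1.symm
    _ ≤ ∑ u ∈ T.levelFinset n, ‖(f ∘ phi) u‖ ^ p :=
        Finset.single_le_sum (fun u _ => Real.rpow_nonneg (norm_nonneg _) p) hvmem
  have hMpn : (1 / (treeC q n : ℝ)) ^ (1 / p) ≤ T.Mp p n (f ∘ phi) := by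
    rw [HomTree.Mp]
    apply Real.rpow_le_rpow (by positivity) ?_ (by positivity)
    nth_rewrite 1 [← mul_one (1 / (treeC q n : ℝ))]
    exact mul_le_mul_of_nonneg_left hsum2 (by positivity)
  have hcomp : T.memTp p (f ∘ phi) := hmap f hmem
  have hle : T.Mp p n (f ∘ phi) ≤ T.normTp p (f ∘ phi) := le_ciSup hcomp n
  have hchain : (1 / (treeC q n : ℝ)) ^ (1 / p)
      ≤ C * (1 / (treeC q m : ℝ)) ^ (1 / p) := by
    calc (1 / (treeC q n : ℝ)) ^ (1 / p) ≤ T.Mp p n (f ∘ phi) := hMpn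
    _ ≤ T.normTp p (f ∘ phi) := hle
    _ ≤ C * T.normTp p f := hC f hmem
    _ = C * (1 / (treeC q m : ℝ)) ^ (1 / p) := by rw [hnorm]
  have hAn : (0 : ℝ) < (treeC q n : ℝ) := hcpos n
  have hBm : (0 : ℝ) < (treeC q m : ℝ) := hcpos m
  have hApow : (0 : ℝ) < (treeC q n : ℝ) ^ (1 / p) := Real.rpow_pos_of_pos hAn _
  have hBpow : (0 : ℝ) < (treeC q m : ℝ) ^ (1 / p) := Real.rpow_pos_of_pos hBm _
  have hCpos : 0 < C := by
    have h2 : (0 : ℝ) < (1 / (treeC q n : ℝ)) ^ (1 / p) :=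
      Real.rpow_pos_of_pos (one_div_pos.mpr (hcpos n)) _
    nlinarith [hchain, hapos, h2]
  rw [show (1 / ((treeC q n : ℕ) : ℝ)) = ((treeC q n : ℕ) : ℝ)⁻¹ from one_div _,
    show (1 / ((treeC q m : ℕ) : ℝ)) = ((treeC q m : ℕ) : ℝ)⁻¹ from one_div _,
    Real.inv_rpow hAn.le, Real.inv_rpow hBm.le] at hchain
  have key : ((treeC q m : ℕ) : ℝ) ^ (1 / p) ≤ C * ((treeC q n : ℕ) : ℝ) ^ (1 / p) := by
    have h := mul_le_mul_of_nonneg_right hchain (mul_pos hApow hBpow).le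
    calc ((treeC q m : ℕ) : ℝ) ^ (1 / p)
        = (((treeC q n : ℕ) : ℝ) ^ (1 / p))⁻¹
          * (((treeC q n : ℕ) : ℝ) ^ (1 / p) * ((treeC q m : ℕ) : ℝ) ^ (1 / p)) :=
        (inv_mul_cancel_left₀ hApow.ne' _).symm
    _ ≤ C * (((treeC q m : ℕ) : ℝ) ^ (1 / p))⁻¹
          * (((treeC q n : ℕ) : ℝ) ^ (1 / p) * ((treeC q m : ℕ) : ℝ) ^ (1 / p)) := h
    _ = C * ((treeC q n : ℕ) : ℝ) ^ (1 / p) := by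
        rw [mul_comm (((treeC q n : ℕ) : ℝ) ^ (1 / p)) (((treeC q m : ℕ) : ℝ) ^ (1 / p)),
          mul_assoc, inv_mul_cancel_left₀ hBpow.ne']
  have h3 := Real.rpow_le_rpow hBpow.le key hp0.le
  rw [← Real.rpow_mul hBm.le, one_div_mul_cancel hp0.ne', Real.rpow_one,
    Real.mul_rpow hCpos.le hApow.le, ← Real.rpow_mul hAn.le,
    one_div_mul_cancel hp0.ne', Real.rpow_one] at h3
  -- h3 : (treeC q m : ℝ) ≤ C ^ p * (treeC q n : ℝ)
  have hnat : treeC q n * q ^ (m - n - 1) ≤ treeC q m := treeC_mul_le' hq (by omega)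
  have hcast : (treeC q n : ℝ) * (q : ℝ) ^ (m - n - 1) ≤ (treeC q m : ℝ) := by
    exact_mod_cast hnat
  have h2q : (2 : ℝ) ^ k ≤ (q : ℝ) ^ (m - n - 1) := by
    calc (2 : ℝ) ^ k ≤ (2 : ℝ) ^ (m - n - 1) :=
        pow_le_pow_right₀ one_le_two (by omega)
    _ ≤ (q : ℝ) ^ (m - n - 1) :=
        pow_le_pow_left₀ (by norm_num) (by exact_mod_cast hq) _
  nlinarith [mul_lt_mul_of_pos_right hk hAn,
    mul_le_mul_of_nonneg_right h2q hAn.le, hcast, h3]
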